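/- Let p = log 5 / (2 log 3). For all x ≥ 0, one has 1 + xᵖ + x^{2p} + x^{3p} + x^{4p} ≥ (1 + x + x²)^{2p}. -/

import Mathlib

open Real

private lemma holder3 {w₁ w₂ : ℝ} (hw₁ : 0 ≤ w₁) (hw₂ : 0 ≤ w₂) (hw : w₁ + w₂ = 1)
    {a₀ a₁ a₂ b₀ b₁ b₂ : ℝ} (ha₀ : 0 ≤ a₀) (ha₁ : 0 ≤ a₁) (ha₂ : 0 ≤ a₂)
    (hb₀ : 0 ≤ b₀) (hb₁ : 0 ≤ b₁) (hb₂ : 0 ≤ b₂)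
    (hA : 0 < a₀ + a₁ + a₂) (hB : 0 < b₀ + b₁ + b₂) :
    a₀ ^ w₁ * b₀ ^ w₂ + a₁ ^ w₁ * b₁ ^ w₂ + a₂ ^ w₁ * b₂ ^ w₂ ≤
      (a₀ + a₁ + a₂) ^ w₁ * (b₀ + b₁ + b₂) ^ w₂ := by
  set SA := a₀ + a₁ + a₂ with hSAdef
  set SB := b₀ + b₁ + b₂ with hSBdef
  have hSA : (0:ℝ) < SA ^ w₁ := Real.rpow_pos_of_pos hA w₁
  have hSB : (0:ℝ) < SB ^ w₂ := Real.rpow_pos_of_pos hB w₂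
  have hSA0 : SA ≠ 0 := ne_of_gt hA
  have hSB0 : SB ≠ 0 := ne_of_gt hB
  have key : ∀ a b : ℝ, 0 ≤ a → 0 ≤ b →
      a ^ w₁ * b ^ w₂ ≤ SA ^ w₁ * SB ^ w₂ * (w₁ * (a / SA) + w₂ * (b / SB)) := by
    intro a b ha hb
    have h := Real.geom_mean_le_arith_mean2_weighted hw₁ hw₂
      (div_nonneg ha hA.le) (div_nonneg hb hB.le) hw
    have heq : (a / SA) ^ w₁ * (b / SB) ^ w₂ = a ^ w₁ * b ^ w₂ / (SA ^ w₁ * SB ^ w₂) := by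
      rw [Real.div_rpow ha hA.le, Real.div_rpow hb hB.le]; ring
    rw [heq] at h
    have h2 := mul_le_mul_of_nonneg_left h (le_of_lt (mul_pos hSA hSB))
    calc a ^ w₁ * b ^ w₂
        = SA ^ w₁ * SB ^ w₂ * (a ^ w₁ * b ^ w₂ / (SA ^ w₁ * SB ^ w₂)) := by
          field_simp
      _ ≤ SA ^ w₁ * SB ^ w₂ * (w₁ * (a / SA) + w₂ * (b / SB)) := h2
  have k0 := key a₀ b₀ ha₀ hb₀
  have k1 := key a₁ b₁ ha₁ hb₁
  have k2 := key a₂ b₂ ha₂ hb₂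
  have e1 : a₀ / SA + a₁ / SA + a₂ / SA = 1 := by
    rw [← add_div, ← add_div, ← hSAdef, div_self hSA0]
  have e2 : b₀ / SB + b₁ / SB + b₂ / SB = 1 := by
    rw [← add_div, ← add_div, ← hSBdef, div_self hSB0]
  calc a₀ ^ w₁ * b₀ ^ w₂ + a₁ ^ w₁ * b₁ ^ w₂ + a₂ ^ w₁ * b₂ ^ w₂
      ≤ SA ^ w₁ * SB ^ w₂ * (w₁ * (a₀ / SA) + w₂ * (b₀ / SB))
        + SA ^ w₁ * SB ^ w₂ * (w₁ * (a₁ / SA) + w₂ * (b₁ / SB))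
        + SA ^ w₁ * SB ^ w₂ * (w₁ * (a₂ / SA) + w₂ * (b₂ / SB)) := by
        exact add_le_add (add_le_add k0 k1) k2
    _ = SA ^ w₁ * SB ^ w₂ *
        (w₁ * (a₀ / SA + a₁ / SA + a₂ / SA) + w₂ * (b₀ / SB + b₁ / SB + b₂ / SB)) := by ring
    _ = SA ^ w₁ * SB ^ w₂ := by rw [e1, e2, mul_one, mul_one, hw, mul_one]

private lemma polyP1 (t : ℝ) (ht : 0 ≤ t) :
    (1 + t^6 + t^12)^5 ≤ (1 + t^5 + t^10)^6 := by
  have key : (1+t)^9 * ((1 + t^5 + t^10)^6 - (1 + t^6 + t^12)^5) =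
      6*t^5 + 49*t^6 + 171*t^7 + 324*t^8 + 336*t^9 + 147*t^10 + 63*t^11 + 537*t^12 + 1503*t^13 + 2067*t^14 + 1431*t^15 + 324*t^16 + 666*t^17 + 3099*t^18 + 5511*t^19 + 5175*t^20 + 2475*t^21 + 1260*t^22 + 4230*t^23 + 8825*t^24 + 9981*t^25 + 6804*t^26 + 3966*t^27 + 5724*t^28 + 10296*t^29 + 12186*t^30 + 9774*t^31 + 7371*t^32 + 8649*t^33 + 11466*t^34 + 11466*t^35 + 8649*t^36 + 7371*t^37 + 9774*t^38 + 12186*t^39 + 10296*t^40 + 5724*t^41 + 3966*t^42 + 6804*t^43 + 9981*t^44 + 8825*t^45 + 4230*t^46 + 1260*t^47 + 2475*t^48 + 5175*t^49 + 5511*t^50 + 3099*t^51 + 666*t^52 + 324*t^53 + 1431*t^54 + 2067*t^55 + 1503*t^56 + 537*t^57 + 63*t^58 + 147*t^59 + 336*t^60 + 324*t^61 + 171*t^62 + 49*t^63 + 6*t^64 := by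
    ring
  have hE : (0:ℝ) ≤ 6*t^5 + 49*t^6 + 171*t^7 + 324*t^8 + 336*t^9 + 147*t^10 + 63*t^11 + 537*t^12 + 1503*t^13 + 2067*t^14 + 1431*t^15 + 324*t^16 + 666*t^17 + 3099*t^18 + 5511*t^19 + 5175*t^20 + 2475*t^21 + 1260*t^22 + 4230*t^23 + 8825*t^24 + 9981*t^25 + 6804*t^26 + 3966*t^27 + 5724*t^28 + 10296*t^29 + 12186*t^30 + 9774*t^31 + 7371*t^32 + 8649*t^33 + 11466*t^34 + 11466*t^35 + 8649*t^36 + 7371*t^37 + 9774*t^38 + 12186*t^39 + 10296*t^40 + 5724*t^41 + 3966*t^42 + 6804*t^43 + 9981*t^44 + 8825*t^45 + 4230*t^46 + 1260*t^47 + 2475*t^48 + 5175*t^49 + 5511*t^50 + 3099*t^51 + 666*t^52 + 324*t^53 + 1431*t^54 + 2067*t^55 + 1503*t^56 + 537*t^57 + 63*t^58 + 147*t^59 + 336*t^60 + 324*t^61 + 171*t^62 + 49*t^63 + 6*t^64 := by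
    positivity
  have h9 : (0:ℝ) < (1+t)^9 := by positivity
  nlinarith [key, hE, h9]

private lemma polyP2 (t : ℝ) (ht : 0 ≤ t) :
    (1 + t^5 + t^10)^6 ≤ 3 * (1 + t^6 + t^12)^5 := by
  have key : 3 * (1 + t^6 + t^12)^5 - (1 + t^5 + t^10)^6 = (t-1)^2 *
      (2 + 4*t + 6*t^2 + 8*t^3 + 10*t^4 + 6*t^5 + 17*t^6 + 28*t^7 + 39*t^8 + 50*t^9 + 40*t^10 + 30*t^11 + 65*t^12 + 100*t^13 + 135*t^14 + 120*t^15 + 105*t^16 + 90*t^17 + 165*t^18 + 240*t^19 + 225*t^20 + 210*t^21 + 195*t^22 + 180*t^23 + 300*t^24 + 294*t^25 + 288*t^26 + 282*t^27 + 276*t^28 + 270*t^29 + 276*t^30 + 282*t^31 + 288*t^32 + 294*t^33 + 300*t^34 + 180*t^35 + 195*t^36 + 210*t^37 + 225*t^38 + 240*t^39 + 165*t^40 + 90*t^41 + 105*t^42 + 120*t^43 + 135*t^44 + 100*t^45 + 65*t^46 + 30*t^47 + 40*t^48 + 50*t^49 + 39*t^50 + 28*t^51 + 17*t^52 + 6*t^53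 + 10*t^54 + 8*t^55 + 6*t^56 + 4*t^57 + 2*t^58) := by
    ring
  have hE : (0:ℝ) ≤ (t-1)^2 *
      (2 + 4*t + 6*t^2 + 8*t^3 + 10*t^4 + 6*t^5 + 17*t^6 + 28*t^7 + 39*t^8 + 50*t^9 + 40*t^10 + 30*t^11 + 65*t^12 + 100*t^13 + 135*t^14 + 120*t^15 + 105*t^16 + 90*t^17 + 165*t^18 + 240*t^19 + 225*t^20 + 210*t^21 + 195*t^22 + 180*t^23 + 300*t^24 + 294*t^25 + 288*t^26 + 282*t^27 + 276*t^28 + 270*t^29 + 276*t^30 + 282*t^31 + 288*t^32 + 294*t^33 + 300*t^34 + 180*t^35 + 195*t^36 + 210*t^37 + 225*t^38 + 240*t^39 + 165*t^40 + 90*t^41 + 105*t^42 + 120*t^43 + 135*t^44 + 100*t^45 + 65*t^46 + 30*t^47 + 40*t^48 + 50*t^49 + 39*t^50 + 28*t^51 + 17*t^52 + 6*t^53 + 10*t^54 + 8*t^55 + 6*t^56 + 4*t^57 + 2*t^58) := by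
    positivity
  linarith

private lemma polyP3 (t : ℝ) (ht : 0 ≤ t) :
    5 * (1 + t^5 + t^10)^4 * (1 + t^6 + t^12)^3 ≤
      (1 + t^4 + t^8 + t^12 + t^16) * (2 * (1 + t^5 + t^10)^6 + 3 * (1 + t^6 + t^12)^5) := by
  have key : (1 + t^4 + t^8 + t^12 + t^16) * (2 * (1 + t^5 + t^10)^6 + 3 * (1 + t^6 + t^12)^5)
      - 5 * (1 + t^5 + t^10)^4 * (1 + t^6 + t^12)^3 = (t-1)^4 *
      (5*t^4 + 12*t^5 + 18*t^6 + 20*t^7 + 20*t^8 + 32*t^9 + 77*t^10 + 116*t^11 + 130*t^12 + 112*t^13 + 112*t^14 + 200*t^15 + 346*t^16 + 412*t^17 + 372*t^18 + 300*t^19 + 400*t^20 + 648*t^21 + 867*t^22 + 840*t^23 + 680*t^24 + 672*t^25 + 948*t^26 + 1260*t^27 + 1370*t^28 + 1172*t^29 + 1020*t^30 + 1128*t^31 + 1455*t^32 + 1652*t^33 + 1595*t^34 + 1332*t^35 + 1206*t^36 + 1332*t^37 + 1595*t^38 + 1652*t^39 + 1455*t^40 + 1128*t^41 + 1020*t^42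 + 1172*t^43 + 1370*t^44 + 1260*t^45 + 948*t^46 + 672*t^47 + 680*t^48 + 840*t^49 + 867*t^50 + 648*t^51 + 400*t^52 + 300*t^53 + 372*t^54 + 412*t^55 + 346*t^56 + 200*t^57 + 112*t^58 + 112*t^59 + 130*t^60 + 116*t^61 + 77*t^62 + 32*t^63 + 20*t^64 + 20*t^65 + 18*t^66 + 12*t^67 + 5*t^68) := by
    ring
  have hE : (0:ℝ) ≤ (t-1)^4 *
      (5*t^4 + 12*t^5 + 18*t^6 + 20*t^7 + 20*t^8 + 32*t^9 + 77*t^10 + 116*t^11 + 130*t^12 + 112*t^13 + 112*t^14 + 200*t^15 + 346*t^16 + 412*t^17 + 372*t^18 + 300*t^19 + 400*t^20 + 648*t^21 + 867*t^22 + 840*t^23 + 680*t^24 + 672*t^25 + 948*t^26 + 1260*t^27 + 1370*t^28 + 1172*t^29 + 1020*t^30 + 1128*t^31 + 1455*t^32 + 1652*t^33 + 1595*t^34 + 1332*t^35 + 1206*t^36 + 1332*t^37 + 1595*t^38 + 1652*t^39 + 1455*t^40 + 1128*t^41 + 1020*t^42 + 1172*t^43 + 1370*t^44 + 1260*t^45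 + 948*t^46 + 672*t^47 + 680*t^48 + 840*t^49 + 867*t^50 + 648*t^51 + 400*t^52 + 300*t^53 + 372*t^54 + 412*t^55 + 346*t^56 + 200*t^57 + 112*t^58 + 112*t^59 + 130*t^60 + 116*t^61 + 77*t^62 + 32*t^63 + 20*t^64 + 20*t^65 + 18*t^66 + 12*t^67 + 5*t^68) := by
    positivity
  linarith

theorem stmt14 (p : ℝ) (hp : p = Real.log 5 / (2 * Real.log 3)) (x : ℝ) (hx : 0 ≤ x) :
    1 + x ^ p + x ^ (2 * p) + x ^ (3 * p) + x ^ (4 * p) ≥ (1 + x + x ^ 2) ^ (2 * p) := by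
  have hlog3 : (0:ℝ) < Real.log 3 := Real.log_pos (by norm_num)
  have hlog5 : (0:ℝ) < Real.log 5 := Real.log_pos (by norm_num)
  have hp0 : 0 < p := by rw [hp]; positivity
  have h43 : 4 * Real.log 3 ≤ 3 * Real.log 5 := by
    have h := Real.log_le_log (by norm_num : (0:ℝ) < 81) (by norm_num : (81:ℝ) ≤ 125)
    rw [show (81:ℝ) = 3^(4:ℕ) by norm_num, show (125:ℝ) = 5^(3:ℕ) by norm_num,
      Real.log_pow, Real.log_pow] at h
    push_cast at h
    linarith
  have h58 : 5 * Real.log 5 ≤ 8 * Real.log 3 := by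
    have h := Real.log_le_log (by norm_num : (0:ℝ) < 3125) (by norm_num : (3125:ℝ) ≤ 6561)
    rw [show (3125:ℝ) = 5^(5:ℕ) by norm_num, show (6561:ℝ) = 3^(8:ℕ) by norm_num,
      Real.log_pow, Real.log_pow] at h
    push_cast at h
    linarith
  have hp23 : 2/3 ≤ p := by
    rw [hp, le_div_iff₀ (by positivity)]
    linarith
  have hp45 : p ≤ 4/5 := by
    rw [hp, div_le_iff₀ (by positivity)]
    linarith
  have h3p : (3:ℝ) ^ (2*p) = 5 := by
    rw [Real.rpow_def_of_pos (by norm_num : (0:ℝ) < 3)]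
    rw [show Real.log 3 * (2*p) = Real.log 5 by rw [hp]; field_simp]
    exact Real.exp_log (by norm_num)
  rcases hx.eq_or_lt with h0 | hx0
  · rw [← h0]
    rw [Real.zero_rpow hp0.ne', Real.zero_rpow (by positivity : (0:ℝ) < 2*p).ne',
      Real.zero_rpow (by positivity : (0:ℝ) < 3*p).ne',
      Real.zero_rpow (by positivity : (0:ℝ) < 4*p).ne']
    norm_num [Real.one_rpow]
  · set t := x ^ (p/4) with htdef
    have ht0 : 0 < t := Real.rpow_pos_of_pos hx0 _
    have hxt : ∀ n : ℕ, x ^ (p/4 * n) = t ^ n := by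
      intro n
      rw [Real.rpow_mul hx, Real.rpow_natCast]
    have hxp : x ^ p = t ^ 4 := by
      rw [← hxt 4]; congr 1; push_cast; ring
    have hx2p : x ^ (2*p) = t ^ 8 := by
      rw [← hxt 8]; congr 1; push_cast; ring
    have hx3p : x ^ (3*p) = t ^ 12 := by
      rw [← hxt 12]; congr 1; push_cast; ring
    have hx4p : x ^ (4*p) = t ^ 16 := by
      rw [← hxt 16]; congr 1; push_cast; ring
    set A := 1 + t^5 + t^10 with hAdef
    set B := 1 + t^6 + t^12 with hBdef
    have hA0 : (0:ℝ) < A := by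
      have h1 := pow_pos ht0 5; have h2 := pow_pos ht0 10
      rw [hAdef]; linarith
    have hB0 : (0:ℝ) < B := by
      have h1 := pow_pos ht0 6; have h2 := pow_pos ht0 12
      rw [hBdef]; linarith
    have hA60 : (0:ℝ) < A^6 := pow_pos hA0 6
    have hB50 : (0:ℝ) < B^5 := pow_pos hB0 5
    have hl1 : 0 ≤ 6 - 4/p := by
      have h : 4/p ≤ 6 := by rw [div_le_iff₀ hp0]; linarith
      linarith
    have hl2 : 0 ≤ 4/p - 5 := by
      have h : 5 ≤ 4/p := by rw [le_div_iff₀ hp0]; linarith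
      linarith
    have hlsum : (6 - 4/p) + (4/p - 5) = 1 := by ring
    have hterm1 : (t^5) ^ (6-4/p) * (t^6) ^ (4/p-5) = x := by
      rw [← hxt 5, ← hxt 6, ← Real.rpow_mul hx, ← Real.rpow_mul hx, ← Real.rpow_add hx0]
      rw [show p/4*((5:ℕ):ℝ)*(6-4/p) + p/4*((6:ℕ):ℝ)*(4/p-5) = 1 by
        push_cast; field_simp; ring]
      exact Real.rpow_one x
    have hterm2 : (t^10) ^ (6-4/p) * (t^12) ^ (4/p-5) = x^2 := by
      rw [← hxt 10, ← hxt 12, ← Real.rpow_mul hx, ← Real.rpow_mul hx, ← Real.rpow_add hx0]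
      rw [show p/4*((10:ℕ):ℝ)*(6-4/p) + p/4*((12:ℕ):ℝ)*(4/p-5) = ((2:ℕ):ℝ) by
        push_cast; field_simp; ring]
      exact Real.rpow_natCast x 2
    have hold : 1 + x + x^2 ≤ A ^ (6-4/p) * B ^ (4/p-5) := by
      have h := holder3 hl1 hl2 hlsum
        (zero_le_one) (pow_nonneg ht0.le 5) (pow_nonneg ht0.le 10)
        (zero_le_one) (pow_nonneg ht0.le 6) (pow_nonneg ht0.le 12)
        hA0 hB0
      have e0 : (1:ℝ)^(6-4/p) * (1:ℝ)^(4/p-5) = 1 := by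
        rw [Real.one_rpow, Real.one_rpow, mul_one]
      rw [e0, hterm1, hterm2] at h
      exact h
    have hstep : (1 + x + x^2) ^ (2*p) ≤ (A ^ (6-4/p) * B ^ (4/p-5)) ^ (2*p) :=
      Real.rpow_le_rpow (by positivity) hold (by positivity)
    set W := A^6 / B^5 with hWdef
    have hW0 : (0:ℝ) < W := div_pos hA60 hB50
    have hABeq : (A ^ (6-4/p) * B ^ (4/p-5)) ^ (2*p) = W ^ (2*p) * (B^8 / A^8) := by
      have m1 : (A ^ (6-4/p) * B ^ (4/p-5)) ^ (2*p)
          = A ^ ((6-4/p)*(2*p)) * B ^ ((4/p-5)*(2*p)) := by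
        rw [Real.mul_rpow (Real.rpow_nonneg hA0.le _) (Real.rpow_nonneg hB0.le _),
          ← Real.rpow_mul hA0.le, ← Real.rpow_mul hB0.le]
      have m2 : A ^ ((6-4/p)*(2*p)) = (A^6) ^ (2*p) / A^8 := by
        rw [show (6-4/p)*(2*p) = ((6:ℕ):ℝ)*(2*p) - ((8:ℕ):ℝ) by
          push_cast; field_simp; ring]
        rw [Real.rpow_sub hA0, Real.rpow_mul hA0.le, Real.rpow_natCast, Real.rpow_natCast]
      have m3 : B ^ ((4/p-5)*(2*p)) = B^8 / (B^5) ^ (2*p) := by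
        rw [show (4/p-5)*(2*p) = ((8:ℕ):ℝ) - ((5:ℕ):ℝ)*(2*p) by
          push_cast; field_simp; ring]
        rw [Real.rpow_sub hB0, Real.rpow_mul hB0.le, Real.rpow_natCast, Real.rpow_natCast]
      have m4 : W ^ (2*p) = (A^6) ^ (2*p) / (B^5) ^ (2*p) := by
        rw [hWdef, Real.div_rpow hA60.le hB50.le]
      rw [m1, m2, m3, m4]; ring
    have hW1 : 1 ≤ W := by
      rw [hWdef, one_le_div hB50]
      exact polyP1 t ht0.le
    have hW3 : W ≤ 3 := by
      rw [hWdef, div_le_iff₀ hB50]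
      have h := polyP2 t ht0.le
      rw [← hAdef, ← hBdef] at h
      linarith
    -- chord bound : (2W+3)/5 ≤ W^(2-2p)
    have hs0 : (0:ℝ) < 2 - 2*p := by linarith
    have hs1 : 2 - 2*p < 1 := by linarith
    have hccv := (Real.strictConcaveOn_rpow hs0 hs1).concaveOn
    have hchord : (2*W+3)/5 ≤ W ^ (2-2*p) := by
      have ha : (0:ℝ) ≤ (3-W)/2 := by linarith
      have hb : (0:ℝ) ≤ (W-1)/2 := by linarith
      have hab : (3-W)/2 + (W-1)/2 = 1 := by ring
      have h := hccv.2 (Set.mem_Ici.mpr (by norm_num : (0:ℝ) ≤ 1))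
        (Set.mem_Ici.mpr (by norm_num : (0:ℝ) ≤ 3)) ha hb hab
      simp only [smul_eq_mul] at h
      rw [Real.one_rpow] at h
      have h3s : (3:ℝ) ^ (2-2*p) = 9/5 := by
        rw [show (2-2*p : ℝ) = ((2:ℕ):ℝ) - 2*p by push_cast; ring,
          Real.rpow_sub (by norm_num : (0:ℝ) < 3), Real.rpow_natCast, h3p]
        norm_num
      rw [h3s] at h
      calc (2*W+3)/5 = (3-W)/2 * 1 + (W-1)/2 * (9/5) := by ring
        _ ≤ ((3-W)/2 * 1 + (W-1)/2 * 3) ^ (2-2*p) := h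
        _ = W ^ (2-2*p) := by congr 1; ring
    have hWs : (0:ℝ) < W ^ (2-2*p) := Real.rpow_pos_of_pos hW0 _
    have hden : (0:ℝ) < 2*W + 3 := by linarith
    have hWp : W ^ (2*p) ≤ 5*W^2 / (2*W+3) := by
      have hsq : W ^ (2*p) * W ^ (2-2*p) = W^2 := by
        rw [← Real.rpow_add hW0,
          show 2*p + (2-2*p) = ((2:ℕ):ℝ) by push_cast; ring, Real.rpow_natCast]
      have h1 : W ^ (2*p) = W^2 / W ^ (2-2*p) := by
        rw [eq_div_iff hWs.ne']; exact hsq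
      rw [h1, div_le_div_iff₀ hWs hden]
      have h2 := mul_le_mul_of_nonneg_left hchord (show (0:ℝ) ≤ 5*W^2 by positivity)
      calc W^2*(2*W+3) = 5*W^2*((2*W+3)/5) := by ring
        _ ≤ 5*W^2*(W ^ (2-2*p)) := h2
        _ = 5*W^2*W ^ (2-2*p) := by ring
    have hfinal : W ^ (2*p) * (B^8 / A^8) ≤ 1 + t^4 + t^8 + t^12 + t^16 := by
      have h1 : W ^ (2*p) * (B^8 / A^8) ≤ (5*W^2/(2*W+3)) * (B^8 / A^8) :=
        mul_le_mul_of_nonneg_right hWp (by positivity)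
      have h2 : (5*W^2/(2*W+3)) * (B^8 / A^8) = 5*A^4*B^3 / (2*A^6 + 3*B^5) := by
        rw [hWdef]
        have hA6 : (A:ℝ)^6 ≠ 0 := hA60.ne'
        have hB5 : (B:ℝ)^5 ≠ 0 := hB50.ne'
        have hd : 2*(A^6/B^5) + 3 = (2*A^6 + 3*B^5)/B^5 := by field_simp
        have hd0 : (2*A^6 + 3*B^5 : ℝ) ≠ 0 := by positivity
        rw [hd]
        field_simp
      have h3 : 5*A^4*B^3 / (2*A^6 + 3*B^5) ≤ 1 + t^4 + t^8 + t^12 + t^16 := by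
        rw [div_le_iff₀ (by positivity : (0:ℝ) < 2*A^6 + 3*B^5)]
        have := polyP3 t ht0.le
        rw [hAdef, hBdef]
        linarith
      linarith
    rw [ge_iff_le, hxp, hx2p, hx3p, hx4p]
    calc (1 + x + x^2) ^ (2*p) ≤ (A ^ (6-4/p) * B ^ (4/p-5)) ^ (2*p) := hstep
      _ = W ^ (2*p) * (B^8 / A^8) := hABeq
      _ ≤ 1 + t^4 + t^8 + t^12 + t^16 := hfinal
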